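/- arXiv:1310.1578 — 2 statements merged into one kernel-verified Lean document; each statement's English description precedes it below -/
import Mathlib

section
/- Let ξ ≥ 0 and η ≥ 0 be random variables on a probability space such that E[exp(2K η^{1/μ})] < ∞ and E[ξ^{2} · 1_{η ≤ N}] ≤ K' exp(K' N^{1/μ}) for all integers N ≥ 1, where K, K' > 0, μ ∈ (1/2,1], and 2K ≥ 2K'. Then E[ξ] < ∞. More precisely, (E[ξ])^2 ≤ E[exp(2K' η^{1/μ})] · Σ_{n=1}^∞ exp(−2K'(n−1)^{1/μ}) · K' exp(K' n^{1/μ}) < ∞. -/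
open Real MeasureTheory ENNReal

set_option maxHeartbeats 1000000 in
lemma aux_summable {K' p : ℝ} (hK' : 0 < K') (hp1 : 1 ≤ p) (hp2 : p ≤ 2) :
    Summable (fun n : ℕ => Real.exp (-(2 * K') * (n : ℝ) ^ p) *
      (K' * Real.exp (K' * ((n : ℝ) + 1) ^ p))) := by
  set c : ℝ := 2 / 9 * K' with hc
  have hc0 : 0 < c := by positivity
  have key : ∀ m : ℕ, 3 ≤ m → Real.exp (-(2 * K') * (m : ℝ) ^ p) *
      (K' * Real.exp (K' * ((m : ℝ) + 1) ^ p)) ≤ K' * Real.exp (-c) ^ m := by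
    intro m hm
    have hm1 : (1 : ℝ) ≤ (m : ℝ) := by exact_mod_cast Nat.one_le_of_lt hm
    have hm3 : (3 : ℝ) ≤ (m : ℝ) := by exact_mod_cast hm
    have h1 : ((m : ℝ) + 1) ^ p ≤ ((4 / 3 : ℝ) * m) ^ p := by
      apply Real.rpow_le_rpow (by linarith) (by linarith) (by linarith)
    have h2 : ((4 / 3 : ℝ) * m) ^ p = (4 / 3 : ℝ) ^ p * (m : ℝ) ^ p :=
      Real.mul_rpow (by norm_num) (by linarith)
    have h3 : (4 / 3 : ℝ) ^ p ≤ (16 / 9 : ℝ) := by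
      calc (4 / 3 : ℝ) ^ p ≤ (4 / 3 : ℝ) ^ (2 : ℝ) :=
            Real.rpow_le_rpow_of_exponent_le (by norm_num) hp2
        _ = (16 / 9 : ℝ) := by
          rw [show (2:ℝ) = ((2:ℕ):ℝ) by norm_num, Real.rpow_natCast]; norm_num
    have h4 : (m : ℝ) ≤ (m : ℝ) ^ p := by
      calc (m : ℝ) = (m : ℝ) ^ (1 : ℝ) := (Real.rpow_one _).symm
        _ ≤ (m : ℝ) ^ p := Real.rpow_le_rpow_of_exponent_le hm1 hp1
    have hmp0 : 0 ≤ (m : ℝ) ^ p := Real.rpow_nonneg (by positivity) _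
    have hexp : -(2 * K') * (m : ℝ) ^ p + K' * ((m : ℝ) + 1) ^ p ≤ -c * m := by
      have hmain : K' * ((m : ℝ) + 1) ^ p ≤ K' * ((16 / 9 : ℝ) * (m : ℝ) ^ p) := by
        apply mul_le_mul_of_nonneg_left _ hK'.le
        calc ((m : ℝ) + 1) ^ p ≤ (4 / 3 : ℝ) ^ p * (m : ℝ) ^ p := by rw [← h2]; exact h1
          _ ≤ (16 / 9 : ℝ) * (m : ℝ) ^ p := mul_le_mul_of_nonneg_right h3 hmp0
      nlinarith
    calc Real.exp (-(2 * K') * (m : ℝ) ^ p) * (K' * Real.exp (K' * ((m : ℝ) + 1) ^ p))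
        = K' * Real.exp (-(2 * K') * (m : ℝ) ^ p + K' * ((m : ℝ) + 1) ^ p) := by
          rw [Real.exp_add]; ring
      _ ≤ K' * Real.exp (-c * m) :=
          mul_le_mul_of_nonneg_left (Real.exp_le_exp.2 hexp) hK'.le
      _ = K' * Real.exp (-c) ^ m := by
          rw [show -c * (m : ℝ) = (m : ℝ) * -c by ring, Real.exp_nat_mul]
  rw [← summable_nat_add_iff 3]
  have hr0 : 0 ≤ Real.exp (-c) := (Real.exp_pos _).le
  have hr1 : Real.exp (-c) < 1 := Real.exp_lt_one_iff.2 (by linarith)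
  refine Summable.of_nonneg_of_le (fun n => by positivity) (fun n => ?_)
    ((summable_geometric_of_lt_one hr0 hr1).mul_left K')
  calc Real.exp (-(2 * K') * ((n + 3 : ℕ) : ℝ) ^ p) *
        (K' * Real.exp (K' * (((n + 3 : ℕ) : ℝ) + 1) ^ p))
        ≤ K' * Real.exp (-c) ^ (n + 3) := key (n + 3) (by omega)
      _ ≤ K' * Real.exp (-c) ^ n := by
          apply mul_le_mul_of_nonneg_left _ hK'.le
          exact pow_le_pow_of_le_one hr0 hr1.le (by omega)

set_option maxHeartbeats 1000000 in
theorem stmt_4 {Ω : Type*} [MeasureSpace Ω] [IsProbabilityMeasure (volume : Measure Ω)]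
    (ξ η : Ω → ℝ) (hξm : Measurable ξ) (hηm : Measurable η)
    (hξ0 : ∀ ω, 0 ≤ ξ ω) (hη0 : ∀ ω, 0 ≤ η ω)
    (K K' μ : ℝ) (hK : 0 < K) (hK' : 0 < K') (hKK' : K' ≤ K)
    (hμ : 1 / 2 < μ) (hμ1 : μ ≤ 1)
    (hexp : ∫⁻ ω, ENNReal.ofReal (Real.exp (2 * K * η ω ^ (1 / μ))) < ⊤)
    (hmom : ∀ N : ℕ, 1 ≤ N →
      ∫⁻ ω in {ω | η ω ≤ (N : ℝ)}, ENNReal.ofReal ((ξ ω) ^ 2)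
        ≤ ENNReal.ofReal (K' * Real.exp (K' * (N : ℝ) ^ (1 / μ)))) :
    (∫⁻ ω, ENNReal.ofReal (ξ ω)) < ⊤ ∧
    (∫⁻ ω, ENNReal.ofReal (ξ ω)) ^ 2 ≤
      (∫⁻ ω, ENNReal.ofReal (Real.exp (2 * K' * η ω ^ (1 / μ)))) *
        ∑' n : ℕ, ENNReal.ofReal
          (Real.exp (-(2 * K') * (n : ℝ) ^ (1 / μ)) *
            (K' * Real.exp (K' * ((n : ℝ) + 1) ^ (1 / μ)))) ∧
    (∑' n : ℕ, ENNReal.ofReal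
      (Real.exp (-(2 * K') * (n : ℝ) ^ (1 / μ)) *
        (K' * Real.exp (K' * ((n : ℝ) + 1) ^ (1 / μ))))) < ⊤ := by
  have hμ0 : 0 < μ := by linarith
  set p : ℝ := 1 / μ with hp
  have hp1 : 1 ≤ p := by rw [hp, le_div_iff₀ hμ0]; linarith
  have hp2 : p ≤ 2 := by rw [hp, div_le_iff₀ hμ0]; linarith
  have hp0 : 0 ≤ p := by linarith
  have hsum := aux_summable hK' hp1 hp2
  set S : ℝ≥0∞ := ∑' n : ℕ, ENNReal.ofReal
      (Real.exp (-(2 * K') * (n : ℝ) ^ p) *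
        (K' * Real.exp (K' * ((n : ℝ) + 1) ^ p))) with hS
  have htermnn : ∀ n : ℕ, 0 ≤ Real.exp (-(2 * K') * (n : ℝ) ^ p) *
      (K' * Real.exp (K' * ((n : ℝ) + 1) ^ p)) := fun n => by positivity
  have hSlt : S < ⊤ := by
    rw [hS, ← ENNReal.ofReal_tsum_of_nonneg htermnn hsum]
    exact ENNReal.ofReal_lt_top
  set E2 : ℝ≥0∞ := ∫⁻ ω, ENNReal.ofReal (Real.exp (2 * K' * η ω ^ p)) with hE2
  have hE2lt : E2 < ⊤ := by
    refine lt_of_le_of_lt (lintegral_mono fun ω => ?_) hexp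
    apply ENNReal.ofReal_le_ofReal
    apply Real.exp_le_exp.2
    have : 0 ≤ η ω ^ p := Real.rpow_nonneg (hη0 ω) _
    nlinarith
  have hηp : Measurable fun ω => η ω ^ p := hηm.pow measurable_const
  have hfm : Measurable fun ω => ξ ω * Real.exp (-K' * η ω ^ p) :=
    hξm.mul ((hηp.const_mul (-K')).exp)
  have hgm : Measurable fun ω => Real.exp (K' * η ω ^ p) := (hηp.const_mul K').exp
  -- Cauchy-Schwarz
  have hcs : (∫⁻ ω, ENNReal.ofReal (ξ ω)) ≤
      (∫⁻ ω, ENNReal.ofReal (ξ ω * Real.exp (-K' * η ω ^ p)) ^ (2:ℝ)) ^ (1/(2:ℝ)) *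
      (∫⁻ ω, ENNReal.ofReal (Real.exp (K' * η ω ^ p)) ^ (2:ℝ)) ^ (1/(2:ℝ)) := by
    have hconj : (2:ℝ).HolderConjugate 2 := Real.HolderConjugate.two_two
    have hCS := ENNReal.lintegral_mul_le_Lp_mul_Lq (volume : Measure Ω) hconj
      (f := fun ω => ENNReal.ofReal (ξ ω * Real.exp (-K' * η ω ^ p)))
      (g := fun ω => ENNReal.ofReal (Real.exp (K' * η ω ^ p)))
      hfm.ennreal_ofReal.aemeasurable
      hgm.ennreal_ofReal.aemeasurable
    refine le_trans (le_of_eq ?_) hCS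
    apply lintegral_congr
    intro ω
    simp only [Pi.mul_apply]
    rw [← ENNReal.ofReal_mul (mul_nonneg (hξ0 ω) (Real.exp_pos _).le)]
    congr 1
    have h1 : -K' * η ω ^ p + K' * η ω ^ p = 0 := by ring
    rw [mul_assoc, ← Real.exp_add, h1, Real.exp_zero, mul_one]
  -- identify the g-factor with E2
  have hgE2 : (∫⁻ ω, ENNReal.ofReal (Real.exp (K' * η ω ^ p)) ^ (2:ℝ)) = E2 := by
    rw [hE2]
    apply lintegral_congr
    intro ω
    rw [ENNReal.ofReal_rpow_of_nonneg (Real.exp_pos _).le (by norm_num : (0:ℝ) ≤ 2)]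
    congr 1
    rw [show (2:ℝ) = ((2:ℕ):ℝ) by norm_num, Real.rpow_natCast, ← Real.exp_nat_mul]
    congr 1
    push_cast
    ring
  -- identify the f-factor with I2
  set I2 : ℝ≥0∞ := ∫⁻ ω, ENNReal.ofReal (ξ ω ^ 2 * Real.exp (-(2 * K') * η ω ^ p))
    with hI2
  have hfI2 : (∫⁻ ω, ENNReal.ofReal (ξ ω * Real.exp (-K' * η ω ^ p)) ^ (2:ℝ)) = I2 := by
    rw [hI2]
    apply lintegral_congr
    intro ω
    rw [ENNReal.ofReal_rpow_of_nonneg (mul_nonneg (hξ0 ω) (Real.exp_pos _).le)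
      (by norm_num : (0:ℝ) ≤ 2)]
    congr 1
    rw [show (2:ℝ) = ((2:ℕ):ℝ) by norm_num, Real.rpow_natCast, mul_pow, ← Real.exp_nat_mul]
    congr 1
    push_cast
    ring
  -- layer-cake bound : I2 ≤ S
  have hI2S : I2 ≤ S := by
    set A : ℕ → Set Ω := fun n => η ⁻¹' Set.Ico (n : ℝ) ((n : ℝ) + 1) with hA
    have hAm : ∀ n, MeasurableSet (A n) := fun n => hηm measurableSet_Ico
    have hAdisj : Pairwise (Function.onFun Disjoint A) := by
      intro m n hmn
      refine Set.disjoint_left.2 fun ω hmω hnω => hmn ?_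
      have h1 := hmω.1; have h2 := hmω.2; have h3 := hnω.1; have h4 := hnω.2
      have hm : m = ⌊η ω⌋₊ := ((Nat.floor_eq_iff (hη0 ω)).2 ⟨h1, h2⟩).symm
      have hn : n = ⌊η ω⌋₊ := ((Nat.floor_eq_iff (hη0 ω)).2 ⟨h3, h4⟩).symm
      rw [hm, hn]
    have hAuniv : (⋃ n, A n) = Set.univ := by
      ext ω
      simp only [Set.mem_iUnion, Set.mem_univ, iff_true, hA, Set.mem_preimage,
        Set.mem_Ico]
      exact ⟨⌊η ω⌋₊, Nat.floor_le (hη0 ω), Nat.lt_floor_add_one _⟩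
    have hsplit : I2 = ∑' n : ℕ, ∫⁻ ω in A n,
        ENNReal.ofReal (ξ ω ^ 2 * Real.exp (-(2 * K') * η ω ^ p)) := by
      rw [hI2, ← setLIntegral_univ, ← hAuniv, lintegral_iUnion hAm hAdisj]
    rw [hsplit, hS]
    apply ENNReal.tsum_le_tsum
    intro n
    have step1 : ∫⁻ ω in A n, ENNReal.ofReal (ξ ω ^ 2 * Real.exp (-(2 * K') * η ω ^ p))
        ≤ ∫⁻ ω in A n, ENNReal.ofReal (Real.exp (-(2 * K') * (n : ℝ) ^ p)) *
            ENNReal.ofReal (ξ ω ^ 2) := by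
      apply setLIntegral_mono
        ((hξm.pow_const 2).ennreal_ofReal.const_mul _)
      intro ω hω
      rw [← ENNReal.ofReal_mul (Real.exp_pos _).le]
      apply ENNReal.ofReal_le_ofReal
      have hηn : (n : ℝ) ^ p ≤ η ω ^ p :=
        Real.rpow_le_rpow (Nat.cast_nonneg n) hω.1 hp0
      have := Real.exp_le_exp.2 (show -(2 * K') * η ω ^ p ≤ -(2 * K') * (n : ℝ) ^ p by
        nlinarith)
      nlinarith [sq_nonneg (ξ ω), Real.exp_pos (-(2 * K') * η ω ^ p)]
    have step2 : ∫⁻ ω in A n, ENNReal.ofReal (Real.exp (-(2 * K') * (n : ℝ) ^ p)) *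
        ENNReal.ofReal (ξ ω ^ 2)
        = ENNReal.ofReal (Real.exp (-(2 * K') * (n : ℝ) ^ p)) *
          ∫⁻ ω in A n, ENNReal.ofReal (ξ ω ^ 2) :=
      lintegral_const_mul _ (hξm.pow_const 2).ennreal_ofReal
    have step3 : ∫⁻ ω in A n, ENNReal.ofReal (ξ ω ^ 2)
        ≤ ∫⁻ ω in {ω | η ω ≤ ((n + 1 : ℕ) : ℝ)}, ENNReal.ofReal (ξ ω ^ 2) := by
      apply lintegral_mono_set
      intro ω hω
      have := hω.2
      simp only [Set.mem_setOf_eq]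
      push_cast
      linarith
    have step4 := hmom (n + 1) (by omega)
    calc ∫⁻ ω in A n, ENNReal.ofReal (ξ ω ^ 2 * Real.exp (-(2 * K') * η ω ^ p))
        ≤ ENNReal.ofReal (Real.exp (-(2 * K') * (n : ℝ) ^ p)) *
          ∫⁻ ω in A n, ENNReal.ofReal (ξ ω ^ 2) := by rw [← step2]; exact step1
      _ ≤ ENNReal.ofReal (Real.exp (-(2 * K') * (n : ℝ) ^ p)) *
          ENNReal.ofReal (K' * Real.exp (K' * ((n + 1 : ℕ) : ℝ) ^ p)) :=
          mul_le_mul_right (le_trans step3 step4) _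
      _ = ENNReal.ofReal (Real.exp (-(2 * K') * (n : ℝ) ^ p) *
          (K' * Real.exp (K' * ((n : ℝ) + 1) ^ p))) := by
          rw [← ENNReal.ofReal_mul (Real.exp_pos _).le]
          push_cast
          ring_nf
  -- assemble the squared bound
  have hsq : (∫⁻ ω, ENNReal.ofReal (ξ ω)) ^ 2 ≤ I2 * E2 := by
    calc (∫⁻ ω, ENNReal.ofReal (ξ ω)) ^ 2
        ≤ ((∫⁻ ω, ENNReal.ofReal (ξ ω * Real.exp (-K' * η ω ^ p)) ^ (2:ℝ)) ^ (1/(2:ℝ)) *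
          (∫⁻ ω, ENNReal.ofReal (Real.exp (K' * η ω ^ p)) ^ (2:ℝ)) ^ (1/(2:ℝ))) ^ 2 :=
          pow_le_pow_left₀ (zero_le) hcs 2
      _ = I2 * E2 := by
          rw [mul_pow, ← hfI2, ← hgE2]
          congr 1 <;>
          · rw [← ENNReal.rpow_natCast (_ ^ (1/(2:ℝ))) 2, ← ENNReal.rpow_mul]
            norm_num
  have hmain : (∫⁻ ω, ENNReal.ofReal (ξ ω)) ^ 2 ≤ E2 * S := by
    calc (∫⁻ ω, ENNReal.ofReal (ξ ω)) ^ 2 ≤ I2 * E2 := hsq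
      _ ≤ S * E2 := mul_le_mul_left hI2S _
      _ = E2 * S := mul_comm _ _
  have hprodlt : E2 * S < ⊤ := ENNReal.mul_lt_top hE2lt hSlt
  refine ⟨?_, hmain, hSlt⟩
  have hlt : (∫⁻ ω, ENNReal.ofReal (ξ ω)) ^ 2 < ⊤ := lt_of_le_of_lt hmain hprodlt
  rw [lt_top_iff_ne_top]
  intro h
  rw [h, ENNReal.top_pow (by norm_num : 2 ≠ 0)] at hlt
  exact lt_irrefl _ hlt
end

section
/- Let g be α-Hölder and h be β-Hölder on [a,b] with α + β > 1. Then for all a ≤ u < v ≤ b, the Young integral satisfies |∫_u^v g ds dh| ≤ C_{α,β} ‖h‖_{a,b,β} (‖g‖_{u,v,∞} + ‖g‖_{u,v,α}(v−u)^α)(v−u)^β, where C_{α,β} depends only on α and β. In particular, if additionally ‖g‖_{u,v,∞} ≤ C(1+M) and ‖g‖_{u,v,α} ≤ C((v−u)^{β₀−α}(1+M) + Hα) for constants C, M, Hα ≥ 0 and β₀ ≥ α, then |∫_u^v g dh| ≤ C' ‖h‖_{a,b,β} (1 + M + Hα (v−u)^α)(v−u)^β. -/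
set_option maxHeartbeats 1000000


open Real

noncomputable def holderSemi (f : ℝ → ℝ) (a b γ : ℝ) : ℝ :=
  sSup {r : ℝ | ∃ s t : ℝ, a ≤ s ∧ s < t ∧ t ≤ b ∧ r = |f t - f s| / (t - s) ^ γ}

noncomputable def supNorm (f : ℝ → ℝ) (a b : ℝ) : ℝ :=
  sSup {r : ℝ | ∃ x : ℝ, a ≤ x ∧ x ≤ b ∧ r = |f x|}

/-- `I` is the (Young / Riemann–Stieltjes) integral `∫_u^v g dh`, defined as a limit
of Riemann–Stieltjes sums as the mesh of the partition tends to 0. -/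
def IsRSIntegral (g h : ℝ → ℝ) (u v I : ℝ) : Prop :=
  ∀ ε : ℝ, 0 < ε → ∃ δ : ℝ, 0 < δ ∧ ∀ (n : ℕ) (t : Fin (n + 1) → ℝ), Monotone t →
    t 0 = u → t (Fin.last n) = v →
    (∀ i : Fin n, t i.succ - t i.castSucc ≤ δ) →
    |(∑ i : Fin n, g (t i.castSucc) * (h (t i.succ) - h (t i.castSucc))) - I| < ε

lemma sum_range_two_mul' (n : ℕ) (f : ℕ → ℝ) :
    ∑ i ∈ Finset.range (2 * n), f i = ∑ j ∈ Finset.range n, (f (2*j) + f (2*j+1)) := by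
  induction n with
  | zero => simp
  | succ n ih =>
      have : 2 * (n + 1) = (2 * n + 1) + 1 := by ring
      rw [this, Finset.sum_range_succ, Finset.sum_range_succ, ih, Finset.sum_range_succ]
      ring

lemma young_main (α β : ℝ) (hα : 0 < α) (hβ : 0 < β) (hαβ : 1 < α + β)
    (g h : ℝ → ℝ) (u v I : ℝ) (huv : u < v)
    (Gs Hs Sg : ℝ) (hGs0 : 0 ≤ Gs) (hHs0 : 0 ≤ Hs) (hSg0 : 0 ≤ Sg)
    (hg : ∀ s t : ℝ, u ≤ s → s ≤ t → t ≤ v → |g t - g s| ≤ Gs * (t-s)^α)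
    (hh : ∀ s t : ℝ, u ≤ s → s ≤ t → t ≤ v → |h t - h s| ≤ Hs * (t-s)^β)
    (hsup : ∀ x : ℝ, u ≤ x → x ≤ v → |g x| ≤ Sg)
    (hI : IsRSIntegral g h u v I) :
    |I| ≤ Sg * (Hs * (v-u)^β) +
      (Gs * Hs * ((v-u)^α * (v-u)^β)) * (1 - (2:ℝ)^(1-(α+β)))⁻¹ := by
  have hvu : (0:ℝ) < v - u := by linarith
  set r : ℝ := (2:ℝ)^(1-(α+β)) with hrdef
  have hr0 : 0 < r := rpow_pos_of_pos two_pos _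
  have hr1 : r < 1 := rpow_lt_one_of_one_lt_of_neg one_lt_two (by linarith)
  have h1r : 0 < 1 - r := by linarith
  set Δ : ℕ → ℝ := fun N => (v-u)/2^N with hΔdef
  have hΔpos : ∀ N, 0 < Δ N := fun N => div_pos hvu (by positivity)
  set S : ℕ → ℝ := fun N => ∑ j ∈ Finset.range (2^N),
      g (u + j * Δ N) * (h (u + ((j:ℝ)+1) * Δ N) - h (u + j * Δ N)) with hSdef
  set D : ℝ := Gs * Hs * ((v-u)^α * (v-u)^β) with hDdef
  have hD0 : 0 ≤ D := by positivity
  -- membership of dyadic points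
  have hpt : ∀ (N : ℕ) (x : ℝ), 0 ≤ x → x ≤ 2^N → u ≤ u + x * Δ N ∧ u + x * Δ N ≤ v := by
    intro N x hx0 hx1
    have h1 : 0 ≤ x * Δ N := mul_nonneg hx0 (hΔpos N).le
    have h2 : x * Δ N ≤ (2:ℝ)^N * Δ N :=
      mul_le_mul_of_nonneg_right hx1 (hΔpos N).le
    have h3 : (2:ℝ)^N * Δ N = v - u := by
      show (2:ℝ)^N * ((v-u)/2^N) = v - u
      field_simp [hΔdef]
    constructor <;> nlinarith
  -- step estimate
  have hstep : ∀ N : ℕ, |S (N+1) - S N| ≤ D * r^N := by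
    intro N
    have hΔhalf : Δ (N+1) = Δ N / 2 := by
      show (v-u)/2^(N+1) = ((v-u)/2^N)/2
      rw [pow_succ]; ring
    set c : ℝ := Δ N / 2 with hcdef
    have hcpos : 0 < c := by positivity
    -- rewrite S (N+1) as a sum over range (2^N) of pairs
    have h2n : (2:ℕ)^(N+1) = 2 * 2^N := by ring
    have hsplit : S (N+1) - S N = ∑ j ∈ Finset.range (2^N),
        ((g (u + (j:ℝ) * Δ N + c) - g (u + (j:ℝ) * Δ N)) *
          (h (u + ((j:ℝ)+1) * Δ N) - h (u + (j:ℝ) * Δ N + c))) := by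
      have : S (N+1) = ∑ j ∈ Finset.range (2^N),
          ((fun i : ℕ => g (u + i * Δ (N+1)) *
            (h (u + ((i:ℝ)+1) * Δ (N+1)) - h (u + i * Δ (N+1)))) (2*j) +
           (fun i : ℕ => g (u + i * Δ (N+1)) *
            (h (u + ((i:ℝ)+1) * Δ (N+1)) - h (u + i * Δ (N+1)))) (2*j+1)) := by
        rw [hSdef]
        simp only [h2n]
        exact sum_range_two_mul' (2^N) _
      rw [this, hSdef]
      rw [← Finset.sum_sub_distrib]
      apply Finset.sum_congr rfl
      intro j _
      simp only [hΔhalf]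
      have e1 : u + ((2*j:ℕ):ℝ) * (Δ N / 2) = u + (j:ℝ) * Δ N := by push_cast; ring
      have e2 : u + (((2*j:ℕ):ℝ)+1) * (Δ N / 2) = u + (j:ℝ) * Δ N + c := by
        rw [hcdef]; push_cast; ring
      have e3 : u + ((2*j+1:ℕ):ℝ) * (Δ N / 2) = u + (j:ℝ) * Δ N + c := by
        rw [hcdef]; push_cast; ring
      have e4 : u + (((2*j+1:ℕ):ℝ)+1) * (Δ N / 2) = u + ((j:ℝ)+1) * Δ N := by
        push_cast; ring
      rw [e1, e2, e3, e4]
      ring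
    -- per-term bound
    have hterm : ∀ j ∈ Finset.range (2^N),
        |(g (u + (j:ℝ) * Δ N + c) - g (u + (j:ℝ) * Δ N)) *
          (h (u + ((j:ℝ)+1) * Δ N) - h (u + (j:ℝ) * Δ N + c))| ≤
        (Gs * c^α) * (Hs * c^β) := by
      intro j hj
      rw [Finset.mem_range] at hj
      have hj1 : ((j:ℝ)+1) ≤ (2:ℝ)^N := by
        have : ((j+1:ℕ):ℝ) ≤ ((2^N:ℕ):ℝ) := Nat.cast_le.2 hj
        push_cast at this; linarith
      have hj0 : (0:ℝ) ≤ (j:ℝ) := Nat.cast_nonneg j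
      set l : ℝ := u + (j:ℝ) * Δ N with hl
      set m : ℝ := u + (j:ℝ) * Δ N + c with hm
      set rr : ℝ := u + ((j:ℝ)+1) * Δ N with hrr
      have hmpt : m = u + ((j:ℝ) + 1/2) * Δ N := by rw [hm, hcdef]; ring
      have hul : u ≤ l := (hpt N j hj0 (by linarith)).1
      have hlv : l ≤ v := (hpt N j hj0 (by linarith)).2
      have humm : u ≤ m := by rw [hmpt]; exact (hpt N ((j:ℝ)+1/2) (by linarith) (by linarith)).1
      have hmv : m ≤ v := by rw [hmpt]; exact (hpt N ((j:ℝ)+1/2) (by linarith) (by linarith)).2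
      have hurr : u ≤ rr := (hpt N ((j:ℝ)+1) (by linarith) hj1).1
      have hrrv : rr ≤ v := (hpt N ((j:ℝ)+1) (by linarith) hj1).2
      have hlm : l ≤ m := by rw [hm, hl]; linarith
      have hmrr : m ≤ rr := by rw [hmpt, hrr]; nlinarith [(hΔpos N).le]
      have hg1 : |g m - g l| ≤ Gs * c^α := by
        have := hg l m hul hlm hmv
        have hml : m - l = c := by rw [hm, hl]; ring
        rwa [hml] at this
      have hh1 : |h rr - h m| ≤ Hs * c^β := by
        have := hh m rr humm hmrr hrrv
        have hrm : rr - m = c := by rw [hrr, hmpt, hcdef]; ring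
        rwa [hrm] at this
      rw [abs_mul]
      exact mul_le_mul hg1 hh1 (abs_nonneg _) (by positivity)
    -- assemble
    have hsum : |S (N+1) - S N| ≤ (2:ℝ)^N * ((Gs * c^α) * (Hs * c^β)) := by
      rw [hsplit]
      calc |∑ j ∈ Finset.range (2^N), _| ≤ ∑ j ∈ Finset.range (2^N),
            |(g (u + (j:ℝ) * Δ N + c) - g (u + (j:ℝ) * Δ N)) *
              (h (u + ((j:ℝ)+1) * Δ N) - h (u + (j:ℝ) * Δ N + c))| :=
          Finset.abs_sum_le_sum_abs _ _
        _ ≤ (Finset.range (2^N)).card • ((Gs * c^α) * (Hs * c^β)) :=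
          Finset.sum_le_card_nsmul _ _ _ hterm
        _ = (2:ℝ)^N * ((Gs * c^α) * (Hs * c^β)) := by
          rw [Finset.card_range, nsmul_eq_mul]; push_cast; ring
    -- arithmetic: 2^N * c^α * c^β ≤ (v-u)^α (v-u)^β r^N
    have hc2 : c = (v-u)/(2:ℝ)^(N+1) := by
      rw [hcdef, hΔdef]; simp only []; rw [pow_succ]; ring
    have hkey : (2:ℝ)^N * (c^α * c^β) ≤ ((v-u)^α * (v-u)^β) * r^N := by
      have hcc : c^α * c^β = c^(α+β) := (Real.rpow_add hcpos α β).symm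
      have hcd : c^(α+β) = (v-u)^(α+β) / ((2:ℝ)^(N+1))^(α+β) := by
        rw [hc2, Real.div_rpow hvu.le (by positivity)]
      have subkey : (2:ℝ)^N / ((2:ℝ)^(N+1))^(α+β) ≤ r^N := by
        have e1 : ((2:ℝ)^(N+1))^(α+β) = (2:ℝ)^((((N:ℝ)+1))*(α+β)) := by
          rw [← Real.rpow_natCast 2 (N+1), ← Real.rpow_mul (by norm_num)]
          push_cast; ring_nf
        have e2 : ((2:ℝ))^N = (2:ℝ)^((N:ℝ)) := (Real.rpow_natCast 2 N).symm
        have e3 : r^N = (2:ℝ)^((1-(α+β))*(N:ℝ)) := by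
          rw [← Real.rpow_natCast r N, hrdef, ← Real.rpow_mul (by norm_num)]
        rw [e1, e3]
        nth_rewrite 1 [e2]
        rw [← Real.rpow_sub two_pos]
        rw [Real.rpow_le_rpow_left_iff one_lt_two]
        nlinarith [Nat.cast_nonneg (α := ℝ) N]
      calc (2:ℝ)^N * (c^α * c^β)
          = (v-u)^(α+β) * ((2:ℝ)^N / ((2:ℝ)^(N+1))^(α+β)) := by
            rw [hcc, hcd]; ring
        _ ≤ (v-u)^(α+β) * r^N :=
            mul_le_mul_of_nonneg_left subkey (rpow_nonneg hvu.le _)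
        _ = ((v-u)^α * (v-u)^β) * r^N := by rw [Real.rpow_add hvu]
    calc |S (N+1) - S N| ≤ (2:ℝ)^N * ((Gs * c^α) * (Hs * c^β)) := hsum
      _ = (Gs * Hs) * ((2:ℝ)^N * (c^α * c^β)) := by ring
      _ ≤ (Gs * Hs) * (((v-u)^α * (v-u)^β) * r^N) :=
          mul_le_mul_of_nonneg_left hkey (by positivity)
      _ = D * r^N := by rw [hDdef]; ring
  -- telescoping
  have htel : ∀ N : ℕ, |S N - S 0| ≤ D * ∑ k ∈ Finset.range N, r^k := by
    intro N
    induction N with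
    | zero => simp
    | succ N ih =>
        have h1 : S (N+1) - S 0 = (S (N+1) - S N) + (S N - S 0) := by ring
        calc |S (N+1) - S 0| ≤ |S (N+1) - S N| + |S N - S 0| := by
              rw [h1]; exact abs_add_le _ _
          _ ≤ D * r^N + D * ∑ k ∈ Finset.range N, r^k := add_le_add (hstep N) ih
          _ = D * ∑ k ∈ Finset.range (N+1), r^k := by
              rw [Finset.sum_range_succ]; ring
  -- geometric bound
  have hgeom : ∀ N : ℕ, ∑ k ∈ Finset.range N, r^k ≤ (1-r)⁻¹ := by
    intro N
    have hrn : (0:ℝ) ≤ r^N := pow_nonneg hr0.le N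
    rw [geom_sum_eq hr1.ne N]
    have he : (r^N - 1)/(r-1) = (1 - r^N)/(1-r) := by
      rw [← neg_sub (1:ℝ) (r^N), ← neg_sub (1:ℝ) r, neg_div_neg_eq]
    rw [he, ← one_div]
    gcongr
    linarith
  -- S 0
  have hS0 : |S 0| ≤ Sg * (Hs * (v-u)^β) := by
    have : S 0 = g u * (h v - h u) := by
      rw [hSdef]
      simp only [pow_zero, Finset.sum_range_one, Nat.cast_zero, zero_mul, add_zero, zero_add,
        one_mul]
      have : Δ 0 = v - u := by rw [hΔdef]; simp
      rw [this]
      ring_nf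
    rw [this, abs_mul]
    exact mul_le_mul (hsup u le_rfl huv.le) (by simpa using hh u v le_rfl huv.le le_rfl)
      (abs_nonneg _) hSg0
  -- all S N bounded
  have hSb : ∀ N : ℕ, |S N| ≤ Sg * (Hs * (v-u)^β) + D * (1-r)⁻¹ := by
    intro N
    have h1 : |S N| ≤ |S 0| + |S N - S 0| := by
      have h1' := abs_add_le (S 0) (S N - S 0)
      have he : S 0 + (S N - S 0) = S N := by ring
      rwa [he] at h1'
    have h2 : D * ∑ k ∈ Finset.range N, r^k ≤ D * (1-r)⁻¹ :=
      mul_le_mul_of_nonneg_left (hgeom N) hD0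
    calc |S N| ≤ |S 0| + |S N - S 0| := h1
      _ ≤ Sg * (Hs * (v-u)^β) + D * (1-r)⁻¹ := add_le_add hS0 ((htel N).trans h2)
  -- limit argument
  apply le_of_forall_pos_le_add
  intro ε hε
  obtain ⟨δ, hδ, hδ'⟩ := hI ε hε
  obtain ⟨N, hN⟩ := pow_unbounded_of_one_lt (R := ℝ) ((v-u)/δ) one_lt_two
  have hmesh : Δ N ≤ δ := by
    rw [hΔdef]
    rw [div_le_iff₀ (by positivity)]
    rw [div_lt_iff₀ hδ] at hN
    nlinarith
  set t : Fin (2^N + 1) → ℝ := fun i => u + (i.val : ℝ) * Δ N with htdef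
  have hmono : Monotone t := by
    intro i j hij
    rw [htdef]
    simp only []
    have hval : i.val ≤ j.val := hij
    have : (i.val : ℝ) ≤ (j.val : ℝ) := Nat.cast_le.2 hval
    nlinarith [(hΔpos N).le]
  have ht0 : t 0 = u := by rw [htdef]; simp
  have htl : t (Fin.last (2^N)) = v := by
    rw [htdef]
    simp only [Fin.val_last]
    push_cast
    show u + (2:ℝ)^N * ((v-u)/2^N) = v
    field_simp [hΔdef]
    ring
  have hmesh' : ∀ i : Fin (2^N), t i.succ - t i.castSucc ≤ δ := by
    intro i
    rw [htdef]
    simp only [Fin.val_succ, Fin.coe_castSucc]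
    push_cast
    have : ((i.val:ℝ)+1) * Δ N - (i.val:ℝ) * Δ N = Δ N := by ring
    nlinarith [hmesh]
  have hsum_eq : (∑ i : Fin (2^N), g (t i.castSucc) * (h (t i.succ) - h (t i.castSucc))) = S N := by
    show _ = ∑ j ∈ Finset.range (2^N),
      g (u + j * Δ N) * (h (u + ((j:ℝ)+1) * Δ N) - h (u + j * Δ N))
    rw [← Fin.sum_univ_eq_sum_range (fun j =>
      g (u + j * Δ N) * (h (u + ((j:ℝ)+1) * Δ N) - h (u + j * Δ N))) (2^N)]
    apply Finset.sum_congr rfl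
    intro i _
    rw [htdef]
    simp only [Fin.val_succ, Fin.coe_castSucc]
    push_cast
    ring_nf
  have hclose := hδ' (2^N) t hmono ht0 htl hmesh'
  rw [hsum_eq] at hclose
  have : |I| ≤ |S N| + ε := by
    have h1 : |I - S N| < ε := by rwa [abs_sub_comm] at hclose
    have := abs_sub_abs_le_abs_sub I (S N)
    linarith [le_abs_self (I - S N)]
  linarith [hSb N]

lemma holderSemi_prop {f : ℝ → ℝ} {a b γ H : ℝ} (hγ : 0 < γ)
    {s₀ t₀ : ℝ} (hs₀ : a ≤ s₀) (hst₀ : s₀ < t₀) (ht₀ : t₀ ≤ b)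
    (hH : ∀ s t : ℝ, a ≤ s → s ≤ t → t ≤ b → |f t - f s| ≤ H * (t - s) ^ γ) :
    0 ≤ holderSemi f a b γ ∧
    ∀ s t : ℝ, a ≤ s → s ≤ t → t ≤ b → |f t - f s| ≤ holderSemi f a b γ * (t - s) ^ γ := by
  set S := {r : ℝ | ∃ s t : ℝ, a ≤ s ∧ s < t ∧ t ≤ b ∧ r = |f t - f s| / (t - s) ^ γ} with hS
  have hbdd : BddAbove S := by
    refine ⟨max H 0, ?_⟩
    rintro r ⟨s, t, has, hst, htb, rfl⟩
    have hp : (0:ℝ) < (t - s) ^ γ := rpow_pos_of_pos (by linarith) γ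
    have := hH s t has hst.le htb
    rw [div_le_iff₀ hp]
    calc |f t - f s| ≤ H * (t - s) ^ γ := this
      _ ≤ max H 0 * (t - s) ^ γ := by
          apply mul_le_mul_of_nonneg_right (le_max_left _ _) hp.le
  have hmem : (|f t₀ - f s₀| / (t₀ - s₀) ^ γ) ∈ S := ⟨s₀, t₀, hs₀, hst₀, ht₀, rfl⟩
  have hnn : 0 ≤ holderSemi f a b γ := by
    have h1 : (0:ℝ) ≤ |f t₀ - f s₀| / (t₀ - s₀) ^ γ :=
      div_nonneg (abs_nonneg _) (rpow_pos_of_pos (by linarith) γ).le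
    exact h1.trans (le_csSup hbdd hmem)
  refine ⟨hnn, fun s t has hst htb => ?_⟩
  rcases eq_or_lt_of_le hst with rfl | hlt
  · simp [Real.zero_rpow (ne_of_gt hγ)]
  · have hp : (0:ℝ) < (t - s) ^ γ := rpow_pos_of_pos (by linarith) γ
    have hmem' : (|f t - f s| / (t - s) ^ γ) ∈ S := ⟨s, t, has, hlt, htb, rfl⟩
    have := le_csSup hbdd hmem'
    rw [← div_le_iff₀ hp]
    exact this

lemma supNorm_prop {g : ℝ → ℝ} {u v B : ℝ} (huv : u ≤ v)
    (hB : ∀ x, u ≤ x → x ≤ v → |g x| ≤ B) :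
    0 ≤ supNorm g u v ∧ ∀ x, u ≤ x → x ≤ v → |g x| ≤ supNorm g u v := by
  set S := {r : ℝ | ∃ x : ℝ, u ≤ x ∧ x ≤ v ∧ r = |g x|} with hS
  have hbdd : BddAbove S := ⟨B, by rintro r ⟨x, hx1, hx2, rfl⟩; exact hB x hx1 hx2⟩
  have hmem : |g u| ∈ S := ⟨u, le_refl _, huv, rfl⟩
  have h2 : ∀ x, u ≤ x → x ≤ v → |g x| ≤ supNorm g u v := fun x hx1 hx2 =>
    le_csSup hbdd ⟨x, hx1, hx2, rfl⟩
  exact ⟨(abs_nonneg _).trans (h2 u le_rfl huv), h2⟩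

theorem stmt_9 (α β : ℝ) (hα : 0 < α) (hα1 : α ≤ 1) (hβ : 0 < β) (hβ1 : β ≤ 1)
    (hαβ : 1 < α + β) :
    -- the Young--Love inequality
    (∃ C : ℝ, 0 < C ∧ ∀ (g h : ℝ → ℝ) (a b u v I : ℝ),
      a ≤ u → u < v → v ≤ b →
      (∃ Hg : ℝ, ∀ s t : ℝ, a ≤ s → s ≤ t → t ≤ b → |g t - g s| ≤ Hg * (t - s) ^ α) →
      (∃ Hh : ℝ, ∀ s t : ℝ, a ≤ s → s ≤ t → t ≤ b → |h t - h s| ≤ Hh * (t - s) ^ β) →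
      IsRSIntegral g h u v I →
      |I| ≤ C * holderSemi h a b β *
        (supNorm g u v + holderSemi g u v α * (v - u) ^ α) * (v - u) ^ β) ∧
    -- the particular consequence
    (∀ β₀ C₀ D : ℝ, α ≤ β₀ → 0 < C₀ → 0 < D →
      ∃ C' : ℝ, 0 < C' ∧ ∀ (g h : ℝ → ℝ) (a b u v I M Hα : ℝ),
        a ≤ u → u < v → v ≤ b → b - a ≤ D → 0 ≤ M → 0 ≤ Hα →
        (∃ Hg : ℝ, ∀ s t : ℝ, a ≤ s → s ≤ t → t ≤ b → |g t - g s| ≤ Hg * (t - s) ^ α) →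
        (∃ Hh : ℝ, ∀ s t : ℝ, a ≤ s → s ≤ t → t ≤ b → |h t - h s| ≤ Hh * (t - s) ^ β) →
        supNorm g u v ≤ C₀ * (1 + M) →
        holderSemi g u v α ≤ C₀ * ((v - u) ^ (β₀ - α) * (1 + M) + Hα) →
        IsRSIntegral g h u v I →
        |I| ≤ C' * holderSemi h a b β * (1 + M + Hα * (v - u) ^ α) * (v - u) ^ β) := by
  set r : ℝ := (2:ℝ)^(1-(α+β)) with hrdef
  have hr0 : 0 < r := rpow_pos_of_pos two_pos _
  have hr1 : r < 1 := rpow_lt_one_of_one_lt_of_neg one_lt_two (by linarith)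
  have h1r : 0 < 1 - r := by linarith
  set K : ℝ := (1 - r)⁻¹ with hKdef
  have hK0 : 0 < K := by positivity
  have part1 : ∀ (g h : ℝ → ℝ) (a b u v I : ℝ),
      a ≤ u → u < v → v ≤ b →
      (∃ Hg : ℝ, ∀ s t : ℝ, a ≤ s → s ≤ t → t ≤ b → |g t - g s| ≤ Hg * (t - s) ^ α) →
      (∃ Hh : ℝ, ∀ s t : ℝ, a ≤ s → s ≤ t → t ≤ b → |h t - h s| ≤ Hh * (t - s) ^ β) →
      IsRSIntegral g h u v I →
      |I| ≤ (1 + K) * holderSemi h a b β *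
        (supNorm g u v + holderSemi g u v α * (v - u) ^ α) * (v - u) ^ β := by
    intro g h a b u v I hau huv hvb ⟨Hg, hHg⟩ ⟨Hh, hHh⟩ hI
    have hvu : (0:ℝ) < v - u := by linarith
    -- Hölder seminorm facts for g on [u,v]
    obtain ⟨hGs0, hGb⟩ := holderSemi_prop hα (le_refl u) huv (le_refl v)
      (fun s t hs hst ht => hHg s t (hau.trans hs) hst (ht.trans hvb))
    -- Hölder seminorm facts for h on [a,b]
    obtain ⟨hHs0, hHb⟩ := holderSemi_prop hβ hau huv hvb hHh
    -- sup norm facts for g on [u,v]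
    have hGbd : ∀ x : ℝ, u ≤ x → x ≤ v →
        |g x| ≤ |g u| + holderSemi g u v α * (v - u) ^ α := by
      intro x hx1 hx2
      have h1 : |g x - g u| ≤ holderSemi g u v α * (x - u) ^ α := hGb u x le_rfl hx1 hx2
      have h2 : (x - u) ^ α ≤ (v - u) ^ α :=
        rpow_le_rpow (by linarith) (by linarith) hα.le
      have h3 : holderSemi g u v α * (x - u) ^ α ≤ holderSemi g u v α * (v - u) ^ α :=
        mul_le_mul_of_nonneg_left h2 hGs0
      have h4 : |g x| ≤ |g u| + |g x - g u| := by
        have := abs_add_le (g u) (g x - g u)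
        have he : g u + (g x - g u) = g x := by ring
        rwa [he] at this
      linarith
    obtain ⟨hSg0, hSgb⟩ := supNorm_prop huv.le hGbd
    have hbound := young_main α β hα hβ hαβ g h u v I huv
      (holderSemi g u v α) (holderSemi h a b β) (supNorm g u v) hGs0 hHs0 hSg0
      hGb (fun s t hs hst ht => hHb s t (hau.trans hs) hst (ht.trans hvb)) hSgb hI
    rw [← hrdef, ← hKdef] at hbound
    set Gs := holderSemi g u v α
    set Hs := holderSemi h a b β
    set Sg := supNorm g u v
    set P := (v - u) ^ β with hPdef
    set Q := (v - u) ^ α with hQdef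
    have hP0 : 0 ≤ P := rpow_nonneg hvu.le β
    have hQ0 : 0 ≤ Q := rpow_nonneg hvu.le α
    nlinarith [mul_nonneg (mul_nonneg (mul_nonneg hHs0 hGs0) hQ0) hP0,
      mul_nonneg (mul_nonneg (mul_nonneg hK0.le hHs0) hSg0) hP0]
  refine ⟨⟨1 + K, by linarith, part1⟩, ?_⟩
  intro β₀ C₀ D hβ₀ hC₀ hD
  refine ⟨(1 + K) * C₀ * (1 + max D 1 ^ β₀), by positivity, ?_⟩
  intro g h a b u v I M Hα hau huv hvb hba hM hHα hHgE hHhE hsup hsemi hI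
  have hvu : (0:ℝ) < v - u := by linarith
  have hβ₀0 : 0 < β₀ := lt_of_lt_of_le hα hβ₀
  obtain ⟨Hg, hHg⟩ := hHgE
  obtain ⟨Hh, hHh⟩ := hHhE
  obtain ⟨hGs0, _⟩ := holderSemi_prop hα (le_refl u) huv (le_refl v)
    (fun s t hs hst ht => hHg s t (hau.trans hs) hst (ht.trans hvb))
  obtain ⟨hHs0, _⟩ := holderSemi_prop hβ hau huv hvb hHh
  have hSg0 : 0 ≤ supNorm g u v := by
    have hGbd : ∀ x : ℝ, u ≤ x → x ≤ v →
        |g x| ≤ |g u| + Hg * (v - u) ^ α := by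
      intro x hx1 hx2
      have h1 : |g x - g u| ≤ Hg * (x - u) ^ α := hHg u x hau hx1 (hx2.trans hvb)
      have hHg0 : 0 ≤ Hg := by
        have := hHg u v hau huv.le hvb
        nlinarith [rpow_pos_of_pos hvu α, abs_nonneg (g v - g u)]
      have h2 : (x - u) ^ α ≤ (v - u) ^ α :=
        rpow_le_rpow (by linarith) (by linarith) hα.le
      have h4 : |g x| ≤ |g u| + |g x - g u| := by
        have := abs_add_le (g u) (g x - g u)
        have he : g u + (g x - g u) = g x := by ring
        rwa [he] at this
      nlinarith
    exact (supNorm_prop huv.le hGbd).1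
  have hbase := part1 g h a b u v I hau huv hvb ⟨Hg, hHg⟩ ⟨Hh, hHh⟩ hI
  set Gs := holderSemi g u v α
  set Hs := holderSemi h a b β
  set Sg := supNorm g u v
  set P := (v - u) ^ β with hPdef
  set Q := (v - u) ^ α with hQdef
  set E := max D 1 ^ β₀ with hEdef
  have hP0 : 0 ≤ P := rpow_nonneg hvu.le β
  have hQ0 : 0 ≤ Q := rpow_nonneg hvu.le α
  have hE0 : 0 < E := rpow_pos_of_pos (lt_of_lt_of_le one_pos (le_max_right D 1)) β₀
  -- (v-u)^(β₀-α) * Q = (v-u)^β₀ ≤ E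
  have hq3 : (v - u) ^ (β₀ - α) * Q = (v - u) ^ β₀ := by
    rw [hQdef, ← Real.rpow_add hvu]
    ring_nf
  have hq4 : (v - u) ^ β₀ ≤ E := by
    rw [hEdef]
    apply rpow_le_rpow hvu.le _ hβ₀0.le
    have : D ≤ max D 1 := le_max_left D 1
    linarith
  have hXY : Sg + Gs * Q ≤ C₀ * (1 + E) * (1 + M + Hα * Q) := by
    have q2 : Gs * Q ≤ C₀ * ((v - u) ^ (β₀ - α) * (1 + M) + Hα) * Q :=
      mul_le_mul_of_nonneg_right hsemi hQ0
    have q2' : C₀ * ((v - u) ^ (β₀ - α) * (1 + M) + Hα) * Q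
        = C₀ * ((v - u) ^ β₀ * (1 + M) + Hα * Q) := by
      rw [← hq3]; ring
    nlinarith [mul_nonneg hHα hQ0, mul_nonneg hC₀.le (mul_nonneg hHα hQ0),
      mul_nonneg (mul_nonneg hC₀.le hE0.le) (mul_nonneg hHα hQ0),
      mul_nonneg hC₀.le (mul_nonneg (by linarith : (0:ℝ) ≤ 1 + M)
        (by linarith : (0:ℝ) ≤ E - (v - u) ^ β₀))]
  have hCH0 : 0 ≤ (1 + K) * Hs := mul_nonneg (by linarith) hHs0
  have h1 : (1 + K) * Hs * (Sg + Gs * Q) ≤ (1 + K) * Hs * (C₀ * (1 + E) * (1 + M + Hα * Q)) :=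
    mul_le_mul_of_nonneg_left hXY hCH0
  have h2 : (1 + K) * Hs * (Sg + Gs * Q) * P
      ≤ (1 + K) * Hs * (C₀ * (1 + E) * (1 + M + Hα * Q)) * P :=
    mul_le_mul_of_nonneg_right h1 hP0
  have h3 : (1 + K) * Hs * (C₀ * (1 + E) * (1 + M + Hα * Q)) * P
      = (1 + K) * C₀ * (1 + E) * Hs * (1 + M + Hα * Q) * P := by ring
  linarith [hbase, h2, h3.le, h3.ge]
end
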